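/- arXiv:math/0607263 — 2 statements merged into one kernel-verified Lean document; each statement's English description precedes it below -/
import Mathlib

section
/- Surjective bimodule maps admit almost rank-preserving lifts: if φ : L → L' is a surjective A-linear map between M-bimodules, ξ' ∈ L', and ε > 0, then there exists ξ ∈ L with φ(ξ) = ξ' and [ξ] ≤ [ξ'] + ε. -/
/- Common setup: a von Neumann algebra `M` acting on a complex Hilbert space `H`,
a positive faithful normal unital trace `τ`, the algebraic tensor product
`A := M ⊗[ℂ] Mᵐᵒᵖ`, bimodules as left `A`-modules and the rank `[ξ]` of an element. -/

set_option maxHeartbeats 1000000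
set_option synthInstance.maxHeartbeats 1000000

noncomputable section

open scoped TensorProduct

namespace RankCompletion

variable {H : Type*} [NormedAddCommGroup H] [InnerProductSpace ℂ H] [CompleteSpace H]

instance : SMulMemClass (VonNeumannAlgebra H) ℂ (H →L[ℂ] H) where
  smul_mem {s} c a ha := by simpa using s.toStarSubalgebra.smul_mem ha c

/-- `p` is a projection in the von Neumann algebra `M`: `p = p*` and `p² = p`. -/
def IsProj (M : VonNeumannAlgebra H) (p : M) : Prop :=
  star p = p ∧ p * p = p

/-- `τ` is a unital, tracial, positive, faithful and normal ℂ-linear functional on `M`. -/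
structure IsFiniteTrace (M : VonNeumannAlgebra H) (τ : M →ₗ[ℂ] ℂ) : Prop where
  unital : τ 1 = 1
  tracial : ∀ x y : M, τ (x * y) = τ (y * x)
  pos_re : ∀ x : M, 0 ≤ (τ (star x * x)).re
  pos_im : ∀ x : M, (τ (star x * x)).im = 0
  faithful : ∀ x : M, τ (star x * x) = 0 → x = 0
  normal : ∀ (p : ℕ → M) (q : M), (∀ n, IsProj M (p n)) → IsProj M q →
    (∀ i j, i ≠ j → p i * p j = 0) →
    (∀ v : H, Filter.Tendsto
        (fun n => (((∑ k ∈ Finset.range n, p k : M) : H →L[ℂ] H)) v)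
        Filter.atTop (nhds ((q : H →L[ℂ] H) v))) →
    (τ q).re = ∑' n, (τ (p n)).re

/-- The algebraic tensor product `A = M ⊗_ℂ Mᵐᵒᵖ`; an `M`-bimodule is a left `A`-module. -/
abbrev BimodRing (M : VonNeumannAlgebra H) : Type _ := (↥M) ⊗[ℂ] (↥M)ᵐᵒᵖ

/-- The rank `[ξ]` of an element `ξ` of an `M`-bimodule `L`:
the infimum of `re τ(p) + re τ(q)` over projections `p q` with `((1-p) ⊗ (1-q)ᵒᵖ) • ξ = 0`. -/
def rank (M : VonNeumannAlgebra H) (τ : M →ₗ[ℂ] ℂ) {L : Type*} [AddCommGroup L]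
    [Module (BimodRing M) L] (ξ : L) : ℝ :=
  sInf { r : ℝ | ∃ p q : M, IsProj M p ∧ IsProj M q ∧
    (((1 - p) ⊗ₜ[ℂ] (MulOpposite.op (1 - q)) : BimodRing M)) • ξ = 0 ∧
    r = (τ p).re + (τ q).re }


/-- Surjective bimodule maps admit almost rank-preserving lifts. -/
theorem exists_lift_rank_le (M : VonNeumannAlgebra H) (τ : M →ₗ[ℂ] ℂ)
    (hτ : IsFiniteTrace M τ)
    {L L' : Type*} [AddCommGroup L] [Module (BimodRing M) L]
    [AddCommGroup L'] [Module (BimodRing M) L']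
    (φ : @LinearMap (BimodRing M) (BimodRing M) _ _ (RingHom.id _) L L' _ _ _ _) (hφ : Function.Surjective φ)
    (ξ' : L') (ε : ℝ) (hε : 0 < ε) :
    ∃ ξ : L, φ ξ = ξ' ∧ rank M τ ξ ≤ rank M τ ξ' + ε := by
  classical
  set S' : Set ℝ := { r : ℝ | ∃ p q : M, IsProj M p ∧ IsProj M q ∧
    (((1 - p) ⊗ₜ[ℂ] (MulOpposite.op (1 - q)) : BimodRing M)) • ξ' = 0 ∧
    r = (τ p).re + (τ q).re } with hS'
  have hproj1 : IsProj M (1 : M) := ⟨star_one _, one_mul 1⟩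
  have hne : S'.Nonempty := by
    refine ⟨(τ (1:M)).re + (τ (1:M)).re, 1, 1, hproj1, hproj1, ?_, rfl⟩
    simp
    exact Module.zero_smul ξ'
  have hbdd : ∀ {L₀ : Type _} [AddCommGroup L₀] [Module (BimodRing M) L₀] (ζ : L₀),
      BddBelow { r : ℝ | ∃ p q : M, IsProj M p ∧ IsProj M q ∧
        (((1 - p) ⊗ₜ[ℂ] (MulOpposite.op (1 - q)) : BimodRing M)) • ζ = 0 ∧
        r = (τ p).re + (τ q).re } := by
    intro L₀ _ _ ζ
    refine ⟨0, ?_⟩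
    rintro r ⟨p, q, hp, hq, -, rfl⟩
    have hp' : (τ p).re = (τ (star p * p)).re := by rw [hp.1, hp.2]
    have hq' : (τ q).re = (τ (star q * q)).re := by rw [hq.1, hq.2]
    rw [hp', hq']
    exact add_nonneg (hτ.pos_re p) (hτ.pos_re q)
  -- choose a near-optimal pair for ξ'
  obtain ⟨r, hrS, hrlt⟩ := Real.lt_sInf_add_pos hne hε
  obtain ⟨p, q, hp, hq, hann, rfl⟩ := hrS
  obtain ⟨ξ₀, hξ₀⟩ := hφ ξ'
  set e : BimodRing M := (1 - p) ⊗ₜ[ℂ] (MulOpposite.op (1 - q)) with he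
  have hpide : (1 - p) * (1 - p) = 1 - p := by
    rw [sub_mul, one_mul, mul_sub, mul_one, hp.2]; abel
  have hqide : (1 - q) * (1 - q) = 1 - q := by
    rw [sub_mul, one_mul, mul_sub, mul_one, hq.2]; abel
  have heide : e * e = e := by
    rw [he, Algebra.TensorProduct.tmul_mul_tmul, hpide, ← MulOpposite.op_mul, hqide]
  refine ⟨ξ₀ - e • ξ₀, ?_, ?_⟩
  · rw [map_sub, map_smul, hξ₀, hann, sub_zero]
  · have hmem : (τ p).re + (τ q).re ∈ { r : ℝ | ∃ p q : M, IsProj M p ∧ IsProj M q ∧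
        (((1 - p) ⊗ₜ[ℂ] (MulOpposite.op (1 - q)) : BimodRing M)) • (ξ₀ - e • ξ₀) = 0 ∧
        r = (τ p).re + (τ q).re } := by
      refine ⟨p, q, hp, hq, ?_, rfl⟩
      rw [← he, smul_sub, smul_smul, heide, sub_self]
    calc rank M τ (ξ₀ - e • ξ₀) ≤ (τ p).re + (τ q).re := csInf_le (hbdd _) hmem
      _ ≤ rank M τ ξ' + ε := le_of_lt hrlt

end RankCompletion
end
end

section
/- Left multiplication by a sum of n elementary tensors is n-Lipschitz in the rank metric: for every M-bimodule L, if ξ = Σ_{i=1}^{n} aᵢ ⊗ bᵢᵒᵖ ∈ A with aᵢ, bᵢ ∈ M, then [ξ • η] ≤ n·[η] for every η ∈ L. -/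
/- Common setup: a von Neumann algebra `M` acting on a complex Hilbert space `H`,
a positive faithful normal unital trace `τ`, the algebraic tensor product
`A := M ⊗[ℂ] Mᵐᵒᵖ`, bimodules as left `A`-modules and the rank `[ξ]` of an element. -/

set_option maxHeartbeats 1000000
set_option synthInstance.maxHeartbeats 1000000

noncomputable section

open scoped TensorProduct Pointwise

namespace RankCompletion

variable {H : Type*} [NormedAddCommGroup H] [InnerProductSpace ℂ H] [CompleteSpace H]

local notation "B" => H →L[ℂ] H

lemma isClosed_centralizer (S : Set B) : IsClosed (Set.centralizer S) := by
  have : Set.centralizer S = ⋂ u ∈ S, {b : B | u * b - b * u = 0} := by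
    ext b
    simp only [Set.mem_centralizer_iff, Set.mem_iInter, Set.mem_setOf_eq, sub_eq_zero]
  rw [this]
  refine isClosed_biInter fun u _ => ?_
  exact isClosed_eq (by continuity) continuous_const

lemma vn_isClosed (M : VonNeumannAlgebra H) : IsClosed (M : Set B) := by
  rw [← M.centralizer_centralizer]
  exact isClosed_centralizer _

lemma cfc_mem_elemental (f : ℂ → ℂ) (a : B) [IsStarNormal a]
    (hf : ContinuousOn f (spectrum ℂ a)) : cfc f a ∈ StarAlgebra.elemental ℂ a := by
  rw [cfc_apply f a, cfcHom_eq_of_isStarNormal]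
  exact SetLike.coe_mem _

lemma cfc_mem_vn (M : VonNeumannAlgebra H) (f : ℂ → ℂ) (a : B) [IsStarNormal a]
    (hf : ContinuousOn f (spectrum ℂ a)) (ha : a ∈ M) : cfc f a ∈ M :=
  StarAlgebra.elemental.le_of_mem (vn_isClosed M) ha (cfc_mem_elemental f a hf)

/-- the square root of `star x * x`. -/
def sqh (x : B) : B := cfc (fun z : ℂ => (Real.sqrt z.re : ℂ)) (star x * x)

lemma sa_star_mul_self (x : B) : IsSelfAdjoint (star x * x) := by
  simpa using IsSelfAdjoint.star_mul_self x

instance (x : B) : IsStarNormal (star x * x) := (sa_star_mul_self x).isStarNormal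

lemma sqh_contOn (x : B) :
    ContinuousOn (fun z : ℂ => (Real.sqrt z.re : ℂ)) (spectrum ℂ (star x * x)) :=
  Continuous.continuousOn (by continuity)

lemma sqh_mem (M : VonNeumannAlgebra H) (x : B) (hx : x ∈ M) : sqh x ∈ M :=
  cfc_mem_vn M _ _ (sqh_contOn x) (mul_mem (star_mem hx) hx)

lemma sqh_sa (x : B) : IsSelfAdjoint (sqh x) := by
  show star _ = _
  rw [sqh, ← cfc_star]
  exact cfc_congr fun z _ => by simp [Complex.conj_ofReal]

lemma sqh_mul_self (x : B) : sqh x * sqh x = star x * x := by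
  rw [sqh, ← cfc_mul _ _ _ (sqh_contOn x) (sqh_contOn x)]
  have h1 : ∀ z ∈ spectrum ℂ (star x * x),
      ((Real.sqrt z.re : ℂ) * (Real.sqrt z.re : ℂ)) = z := by
    intro z hz
    have hre : z = z.re := (sa_star_mul_self x).mem_spectrum_eq_re hz
    have hnn : 0 ≤ z.re := by
      have := spectrum_star_mul_self_nonneg (b := x) z.re ?_
      · exact this
      · have : (z.re : ℂ) ∈ spectrum ℂ (star x * x) := hre ▸ hz
        rw [← spectrum.algebraMap_mem_iff (R := ℝ) (S := ℂ)]
        · exact_mod_cast this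
    rw [← Complex.ofReal_mul, Real.mul_self_sqrt hnn]
    exact hre.symm
  rw [cfc_congr h1, cfc_id' ℂ (star x * x)]

local notation "⟪" x ", " y "⟫" => @inner ℂ _ _ x y

lemma norm_sqh_apply (x : B) (ζ : H) : ‖sqh x ζ‖ = ‖x ζ‖ := by
  have h1 : ⟪sqh x ζ, sqh x ζ⟫ = ⟪x ζ, x ζ⟫ := by
    have hsa : ContinuousLinearMap.adjoint (sqh x) = sqh x := by
      rw [← ContinuousLinearMap.star_eq_adjoint]; exact (sqh_sa x)
    have e1 : ⟪(ContinuousLinearMap.adjoint (sqh x)) ζ, sqh x ζ⟫ = ⟪ζ, sqh x (sqh x ζ)⟫ :=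
      ContinuousLinearMap.adjoint_inner_left (sqh x) (sqh x ζ) ζ
    rw [hsa] at e1
    have e1' : ⟪sqh x ζ, sqh x ζ⟫ = ⟪ζ, (sqh x * sqh x) ζ⟫ := by
      rw [ContinuousLinearMap.mul_apply]; exact e1
    have e2 : ⟪x ζ, x ζ⟫ = ⟪ζ, (star x * x) ζ⟫ := by
      rw [ContinuousLinearMap.mul_apply, ContinuousLinearMap.star_eq_adjoint,
        ContinuousLinearMap.adjoint_inner_right]
    rw [e1', e2, sqh_mul_self]
  have h3 : ‖sqh x ζ‖ ^ 2 = ‖x ζ‖ ^ 2 := by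
    rw [← @inner_self_eq_norm_sq ℂ, ← @inner_self_eq_norm_sq ℂ, h1]
  nlinarith [norm_nonneg (sqh x ζ), norm_nonneg (x ζ), sq_nonneg (‖sqh x ζ‖ - ‖x ζ‖)]

lemma x_eq_of_sqh_eq (x : B) {ζ ζ' : H} (hh : sqh x ζ = sqh x ζ') : x ζ = x ζ' := by
  have : ‖x ζ - x ζ'‖ = 0 := by
    rw [← map_sub, ← norm_sqh_apply, map_sub, hh, sub_self, norm_zero]
  rwa [norm_eq_zero, sub_eq_zero] at this

/-- The range of `sqh x`. -/
def Ks (x : B) : Submodule ℂ H := LinearMap.range (sqh x).toLinearMap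

/-- Its closure. -/
def Kc (x : B) : Submodule ℂ H := (Ks x).topologicalClosure

instance (x : B) : CompleteSpace (Kc x) :=
  (Submodule.isClosed_topologicalClosure _).completeSpace_coe

def pick (x : B) (k : Ks x) : H := (LinearMap.mem_range.mp k.2).choose

lemma pick_spec (x : B) (k : Ks x) : sqh x (pick x k) = (k : H) :=
  (LinearMap.mem_range.mp k.2).choose_spec

lemma pick_spec' (x : B) (ζ : H) (hm : sqh x ζ ∈ Ks x) :
    x (pick x ⟨sqh x ζ, hm⟩) = x ζ :=
  x_eq_of_sqh_eq x (pick_spec x ⟨sqh x ζ, hm⟩)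

def pre (x : B) : Ks x →ₗ[ℂ] H where
  toFun k := x (pick x k)
  map_add' k l := by
    have h : sqh x (pick x (k + l)) = sqh x (pick x k + pick x l) := by
      rw [map_add, pick_spec, pick_spec, pick_spec]; rfl
    show x (pick x (k + l)) = x (pick x k) + x (pick x l)
    rw [x_eq_of_sqh_eq x h, map_add]
  map_smul' c k := by
    have h : sqh x (pick x (c • k)) = sqh x (c • pick x k) := by
      rw [map_smul, pick_spec, pick_spec]; rfl
    show x (pick x (c • k)) = c • x (pick x k)
    rw [x_eq_of_sqh_eq x h, map_smul]

lemma pre_norm (x : B) (k : Ks x) : ‖pre x k‖ = ‖k‖ := by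
  show ‖x (pick x k)‖ = ‖k‖
  rw [← norm_sqh_apply, pick_spec]
  rfl

def fL (x : B) : Ks x →L[ℂ] H :=
  LinearMap.mkContinuous (pre x) 1 (fun k => by rw [pre_norm, one_mul])

lemma fL_norm (x : B) (k : Ks x) : ‖fL x k‖ = ‖k‖ := pre_norm x k

def eL (x : B) : Ks x →L[ℂ] Kc x :=
  LinearMap.mkContinuous (Submodule.inclusion (Submodule.le_topologicalClosure _)) 1
    (fun k => by rw [one_mul]; rfl)

lemma eL_norm (x : B) (k : Ks x) : ‖eL x k‖ = ‖k‖ := rfl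

lemma eL_isometry (x : B) : Isometry (eL x) :=
  AddMonoidHomClass.isometry_of_norm _ (eL_norm x)

lemma eL_ui (x : B) : IsUniformInducing (eL x) := (eL_isometry x).isUniformInducing

lemma eL_dense (x : B) : DenseRange (eL x) := by
  intro y
  rw [Metric.mem_closure_iff]
  intro ε hε
  have hy : (y : H) ∈ closure (Ks x : Set H) := by
    have h2 := y.2
    rw [Kc, ← Submodule.topologicalClosure_coe] at *
    exact h2
  rw [Metric.mem_closure_iff] at hy
  obtain ⟨z, hz, hd⟩ := hy ε hε
  exact ⟨eL x ⟨z, hz⟩, Set.mem_range_self _, by rwa [Subtype.dist_eq]⟩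

def extL (x : B) : Kc x →L[ℂ] H :=
  ContinuousLinearMap.extend (fL x) (eL x)

lemma extL_eq (x : B) (k : Ks x) : extL x (eL x k) = fL x k :=
  (fL x).extend_eq (eL_dense x) (eL_ui x) k

/-- The polar partial isometry of `x`. -/
def vA (x : B) : B := (extL x).comp ((Kc x).orthogonalProjectionOnto)

lemma vA_apply (x : B) (ζ : H) : vA x ζ = extL x ((Kc x).orthogonalProjectionOnto ζ) := rfl

lemma vA_apply_sqh (x : B) (ζ : H) : vA x (sqh x ζ) = x ζ := by
  have hm : sqh x ζ ∈ Ks x := LinearMap.mem_range_self (sqh x).toLinearMap ζ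
  have hmc : sqh x ζ ∈ Kc x := Submodule.le_topologicalClosure _ hm
  have hp : (Kc x).orthogonalProjectionOnto (sqh x ζ) = eL x ⟨sqh x ζ, hm⟩ := by
    apply Subtype.ext
    rw [Submodule.coe_orthogonalProjectionOnto_apply, Submodule.starProjection_eq_self_iff.mpr hmc]
    rfl
  rw [vA_apply, hp, extL_eq]
  exact pick_spec' x ζ hm
lemma sqh_adj (x : B) : ContinuousLinearMap.adjoint (sqh x) = sqh x := by
  rw [← ContinuousLinearMap.star_eq_adjoint]; exact (sqh_sa x)

lemma x_adj_x_eq (x : B) (ζ : H) :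
    ContinuousLinearMap.adjoint x (x ζ) = sqh x (sqh x ζ) := by
  have := congrFun (congrArg DFunLike.coe (sqh_mul_self x)) ζ
  simpa [ContinuousLinearMap.mul_apply, ContinuousLinearMap.star_eq_adjoint] using this.symm

def Pc (x : B) : B := (Kc x).subtypeL.comp ((Kc x).orthogonalProjectionOnto)

lemma Pc_apply (x : B) (ζ : H) : Pc x ζ = (Kc x).orthogonalProjectionOnto ζ := rfl

lemma Pc_apply_mem (x : B) {u : H} (hu : u ∈ Kc x) : Pc x u = u := by
  rw [Pc_apply, Submodule.coe_orthogonalProjectionOnto_apply, Submodule.starProjection_eq_self_iff.mpr hu]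

lemma sqh_mem_Ks (x : B) (ζ : H) : sqh x ζ ∈ Ks x := LinearMap.mem_range_self (sqh x).toLinearMap ζ

lemma sqh_mem_Kc (x : B) (ζ : H) : sqh x ζ ∈ Kc x :=
  Submodule.le_topologicalClosure _ (sqh_mem_Ks x ζ)

lemma mem_Kc_orthogonal_iff (x : B) (ζ : H) : ζ ∈ (Kc x)ᗮ ↔ sqh x ζ = 0 := by
  constructor
  · intro hζ
    have h0 : ⟪sqh x (sqh x ζ), ζ⟫ = 0 :=
      (Submodule.mem_orthogonal _ ζ).mp hζ _ (sqh_mem_Kc x _)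
    have h1 : ⟪(ContinuousLinearMap.adjoint (sqh x)) (sqh x ζ), ζ⟫ = ⟪sqh x ζ, sqh x ζ⟫ :=
      ContinuousLinearMap.adjoint_inner_left (sqh x) ζ (sqh x ζ)
    rw [sqh_adj] at h1
    rw [← inner_self_eq_zero (𝕜 := ℂ), ← h1]
    exact h0
  · intro hζ
    rw [Submodule.mem_orthogonal]
    intro u hu
    have hclosed : IsClosed {u : H | ⟪u, ζ⟫ = 0} :=
      isClosed_eq (by continuity) continuous_const
    have hKs : (Ks x : Set H) ⊆ {u : H | ⟪u, ζ⟫ = 0} := by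
      intro _ hm
      obtain ⟨ξ, rfl⟩ := LinearMap.mem_range.mp hm
      show ⟪sqh x ξ, ζ⟫ = 0
      have h1 : ⟪(ContinuousLinearMap.adjoint (sqh x)) ξ, ζ⟫ = ⟪ξ, sqh x ζ⟫ :=
        ContinuousLinearMap.adjoint_inner_left (sqh x) ζ ξ
      rw [sqh_adj] at h1
      rw [h1, hζ, inner_zero_right]
    have : (Kc x : Set H) ⊆ {u : H | ⟪u, ζ⟫ = 0} := by
      rw [Kc, Submodule.topologicalClosure_coe]
      exact closure_minimal hKs hclosed
    exact this hu

lemma vA_zero_of_sqh_zero (x : B) {ζ : H} (hζ : sqh x ζ = 0) : vA x ζ = 0 := by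
  rw [vA_apply, Submodule.orthogonalProjectionOnto_eq_zero_iff.mpr ((mem_Kc_orthogonal_iff x ζ).mpr hζ),
    map_zero]

lemma fL_inner (x : B) (k k' : Ks x) : ⟪fL x k, fL x k'⟫ = ⟪(k : H), (k' : H)⟫ := by
  show ⟪x (pick x k), x (pick x k')⟫ = _
  have h1 : ⟪(ContinuousLinearMap.adjoint x) (x (pick x k)), pick x k'⟫
      = ⟪x (pick x k), x (pick x k')⟫ :=
    ContinuousLinearMap.adjoint_inner_left x (pick x k') (x (pick x k))
  rw [← h1, x_adj_x_eq]
  have h2 : ⟪(ContinuousLinearMap.adjoint (sqh x)) (sqh x (pick x k)), pick x k'⟫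
      = ⟪sqh x (pick x k), sqh x (pick x k')⟫ :=
    ContinuousLinearMap.adjoint_inner_left (sqh x) (pick x k') (sqh x (pick x k))
  rw [sqh_adj] at h2
  rw [h2, pick_spec, pick_spec]

lemma extL_inner (x : B) (y y' : Kc x) :
    ⟪extL x y, extL x y'⟫ = ⟪(y : H), (y' : H)⟫ := by
  have hcont : Continuous (extL x) := (extL x).continuous
  have step1 : ∀ k' : Ks x, ∀ y : Kc x, ⟪extL x y, extL x (eL x k')⟫ = ⟪(y : H), ((eL x k' : Kc x) : H)⟫ := by
    intro k'
    have hEq : Set.EqOn (fun y : Kc x => ⟪extL x y, extL x (eL x k')⟫)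
        (fun y : Kc x => ⟪(y : H), ((eL x k' : Kc x) : H)⟫) (Set.range (eL x)) := by
      rintro _ ⟨k, rfl⟩
      show ⟪extL x (eL x k), extL x (eL x k')⟫ = _
      rw [extL_eq x k, extL_eq x k']
      exact fL_inner x k k'
    have := Continuous.ext_on (eL_dense x)
      (Continuous.inner hcont continuous_const)
      (Continuous.inner continuous_subtype_val continuous_const) hEq
    exact fun y => congrFun this y
  have hEq2 : Set.EqOn (fun y' : Kc x => ⟪extL x y, extL x y'⟫)
      (fun y' : Kc x => ⟪(y : H), (y' : H)⟫) (Set.range (eL x)) := by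
    rintro _ ⟨k', rfl⟩
    exact step1 k' y
  have step2 := Continuous.ext_on (eL_dense x)
      (Continuous.inner continuous_const hcont)
      (Continuous.inner continuous_const continuous_subtype_val) hEq2
  exact congrFun step2 y'

lemma star_vA_mul_vA (x : B) : star (vA x) * vA x = Pc x := by
  ext ζ
  apply ext_inner_right ℂ
  intro ζ'
  rw [ContinuousLinearMap.mul_apply, ContinuousLinearMap.star_eq_adjoint]
  rw [ContinuousLinearMap.adjoint_inner_left (vA x) ζ' (vA x ζ)]
  rw [vA_apply, vA_apply, extL_inner]
  have horth : ζ' - Pc x ζ' ∈ (Kc x)ᗮ := (Kc x).sub_starProjection_mem_orthogonal ζ'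
  have h0 : ⟪Pc x ζ, ζ' - Pc x ζ'⟫ = 0 :=
    (Submodule.mem_orthogonal _ _).mp horth _ (by rw [Pc_apply]; exact Submodule.coe_mem _)
  have : ⟪Pc x ζ, ζ'⟫ = ⟪Pc x ζ, Pc x ζ'⟫ := by
    have h2 := inner_sub_right (𝕜 := ℂ) (Pc x ζ) ζ' (Pc x ζ')
    rw [h0] at h2
    linear_combination -h2
  rw [this]
  rfl

lemma Pc_sa (x : B) : star (Pc x) = Pc x := by
  rw [← star_vA_mul_vA, star_mul, star_star]

lemma Pc_idem (x : B) : Pc x * Pc x = Pc x := by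
  ext ζ
  rw [ContinuousLinearMap.mul_apply]
  exact Pc_apply_mem x (by rw [Pc_apply]; exact Submodule.coe_mem _)

lemma vA_mul_Pc (x : B) : vA x * Pc x = vA x := by
  ext ζ
  rw [ContinuousLinearMap.mul_apply, vA_apply, vA_apply]
  congr 1
  exact Submodule.orthogonalProjectionOnto_mem_subspace_eq_self ((Kc x).orthogonalProjectionOnto ζ)

lemma Pc_mul_sqh (x : B) : Pc x * sqh x = sqh x := by
  ext ζ
  rw [ContinuousLinearMap.mul_apply]
  exact Pc_apply_mem x (sqh_mem_Kc x ζ)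

lemma vA_mul_sqh (x : B) : vA x * sqh x = x := by
  ext ζ
  rw [ContinuousLinearMap.mul_apply]
  exact vA_apply_sqh x ζ

lemma ker_Pc_iff (x : B) (ζ : H) : Pc x ζ = 0 ↔ sqh x ζ = 0 := by
  rw [← mem_Kc_orthogonal_iff, ← Submodule.orthogonalProjectionOnto_eq_zero_iff (K := Kc x), Pc_apply]
  exact ⟨fun h => by exact_mod_cast h, fun h => by rw [h]; rfl⟩
lemma star_x_eq (x : B) : star x = sqh x * star (vA x) := by
  conv_lhs => rw [← vA_mul_sqh x]
  rw [star_mul, (sqh_sa x)]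

lemma inner_vA_right_zero (x : B) {ζ : H} (hζ : star x ζ = 0) (w : H) :
    ⟪ζ, vA x w⟫ = 0 := by
  have hEq : Set.EqOn (fun y : Kc x => ⟪ζ, extL x y⟫) (fun _ : Kc x => (0 : ℂ))
      (Set.range (eL x)) := by
    rintro _ ⟨k, rfl⟩
    show ⟪ζ, extL x (eL x k)⟫ = 0
    rw [extL_eq x k]
    show ⟪ζ, x (pick x k)⟫ = 0
    have h1 : ⟪(ContinuousLinearMap.adjoint x) ζ, pick x k⟫ = ⟪ζ, x (pick x k)⟫ :=
      ContinuousLinearMap.adjoint_inner_left x (pick x k) ζ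
    rw [← h1, ← ContinuousLinearMap.star_eq_adjoint, hζ, inner_zero_left]
  have := Continuous.ext_on (eL_dense x)
    (Continuous.inner continuous_const (extL x).continuous) continuous_const hEq
  have h2 := congrFun this ((Kc x).orthogonalProjectionOnto w)
  exact h2

lemma ker_star_vA_iff (x : B) (ζ : H) : star (vA x) ζ = 0 ↔ star x ζ = 0 := by
  constructor
  · intro h
    rw [star_x_eq x]
    show sqh x (star (vA x) ζ) = 0
    rw [h, map_zero]
  · intro h
    have h1 : ⟪star (vA x) ζ, star (vA x) ζ⟫ = ⟪ζ, vA x (star (vA x) ζ)⟫ := by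
      rw [ContinuousLinearMap.star_eq_adjoint]
      exact ContinuousLinearMap.adjoint_inner_left (vA x) (ContinuousLinearMap.adjoint (vA x) ζ) ζ
    rw [inner_vA_right_zero x h] at h1
    rwa [inner_self_eq_zero] at h1

lemma ker_lA_iff (x : B) (ζ : H) : (vA x * star (vA x)) ζ = 0 ↔ star x ζ = 0 := by
  rw [← ker_star_vA_iff]
  constructor
  · intro h
    have h1 : ⟪star (vA x) ζ, star (vA x) ζ⟫ = ⟪ζ, vA x (star (vA x) ζ)⟫ := by
      rw [ContinuousLinearMap.star_eq_adjoint]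
      exact ContinuousLinearMap.adjoint_inner_left (vA x) (ContinuousLinearMap.adjoint (vA x) ζ) ζ
    rw [show vA x (star (vA x) ζ) = (vA x * star (vA x)) ζ from rfl, h,
      inner_zero_right] at h1
    rwa [inner_self_eq_zero] at h1
  · intro h
    show vA x (star (vA x) ζ) = 0
    rw [h, map_zero]

lemma lA_sa (x : B) : star (vA x * star (vA x)) = vA x * star (vA x) := by
  rw [star_mul, star_star]

lemma lA_idem (x : B) :
    (vA x * star (vA x)) * (vA x * star (vA x)) = vA x * star (vA x) := by
  rw [mul_assoc (vA x) (star (vA x)) _, ← mul_assoc (star (vA x)) (vA x) (star (vA x)),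
    star_vA_mul_vA, ← mul_assoc, vA_mul_Pc]

lemma lA_mul_x (x : B) : (vA x * star (vA x)) * x = x := by
  have h0 : (vA x * star (vA x)) * x = (vA x * star (vA x)) * (vA x * sqh x) := by
    rw [vA_mul_sqh]
  rw [h0, mul_assoc (vA x) (star (vA x)) _, ← mul_assoc (star (vA x)) (vA x) (sqh x),
    star_vA_mul_vA, ← mul_assoc, vA_mul_Pc, vA_mul_sqh]

lemma vA_mem (M : VonNeumannAlgebra H) (x : B) (hx : x ∈ M) : vA x ∈ M := by
  have hh := sqh_mem M x hx
  have hmem : vA x ∈ Set.centralizer (Set.centralizer (M : Set B)) := by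
    rw [Set.mem_centralizer_iff]
    intro u hu
    have hux : x * u = u * x := hu x hx
    have huh : sqh x * u = u * sqh x := hu (sqh x) hh
    ext ζ
    show u (vA x ζ) = vA x (u ζ)
    have hS : IsClosed {w : H | u (vA x w) = vA x (u w)} := by
      apply isClosed_eq
      · exact u.continuous.comp (vA x).continuous
      · exact (vA x).continuous.comp u.continuous
    have hKsS : (Ks x : Set H) ⊆ {w : H | u (vA x w) = vA x (u w)} := by
      intro _ hm
      obtain ⟨ξ, rfl⟩ := LinearMap.mem_range.mp hm
      show u (vA x (sqh x ξ)) = vA x (u (sqh x ξ))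
      have h1 : u (sqh x ξ) = sqh x (u ξ) := by
        have := congrFun (congrArg DFunLike.coe huh) ξ
        simpa [ContinuousLinearMap.mul_apply] using this.symm
      have h2 : u (x ξ) = x (u ξ) := by
        have := congrFun (congrArg DFunLike.coe hux) ξ
        simpa [ContinuousLinearMap.mul_apply] using this.symm
      rw [vA_apply_sqh, h1, vA_apply_sqh]
      exact h2
    have hKcS : (Kc x : Set H) ⊆ {w : H | u (vA x w) = vA x (u w)} := by
      rw [Kc, Submodule.topologicalClosure_coe]
      exact closure_minimal hKsS hS
    have hOrth : ∀ w ∈ (Kc x)ᗮ, u (vA x w) = vA x (u w) := by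
      intro w hw
      have hw0 : sqh x w = 0 := (mem_Kc_orthogonal_iff x w).mp hw
      have h1 : vA x w = 0 := vA_zero_of_sqh_zero x hw0
      have h2 : sqh x (u w) = 0 := by
        have := congrFun (congrArg DFunLike.coe huh) w
        simp only [ContinuousLinearMap.mul_apply] at this
        rw [this, hw0, map_zero]
      rw [h1, map_zero, vA_zero_of_sqh_zero x h2]
    have hdec : ζ = Pc x ζ + (ζ - Pc x ζ) := by abel
    have e1 : u (vA x (Pc x ζ)) = vA x (u (Pc x ζ)) :=
      hKcS (by rw [Pc_apply]; exact Submodule.coe_mem _)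
    have e2 : u (vA x (ζ - Pc x ζ)) = vA x (u (ζ - Pc x ζ)) :=
      hOrth _ ((Kc x).sub_starProjection_mem_orthogonal ζ)
    calc u (vA x ζ) = u (vA x (Pc x ζ + (ζ - Pc x ζ))) := by rw [← hdec]
      _ = u (vA x (Pc x ζ)) + u (vA x (ζ - Pc x ζ)) := by rw [map_add, map_add]
      _ = vA x (u (Pc x ζ)) + vA x (u (ζ - Pc x ζ)) := by rw [e1, e2]
      _ = vA x (u (Pc x ζ + (ζ - Pc x ζ))) := by rw [map_add, map_add]
      _ = vA x (u ζ) := by rw [← hdec]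
  rwa [M.centralizer_centralizer] at hmem

/-! ### Projections determined by kernels -/

lemma proj_ker_inner {E : B} (hsa : star E = E) {w : H} (ζ : H) (hw : E w = 0) :
    ⟪w, E ζ⟫ = 0 := by
  have h1 : ⟪(ContinuousLinearMap.adjoint E) w, ζ⟫ = ⟪w, E ζ⟫ :=
    ContinuousLinearMap.adjoint_inner_left E ζ w
  rw [← h1, ← ContinuousLinearMap.star_eq_adjoint, hsa, hw, inner_zero_left]

lemma proj_fix {E : B} (hsa : star E = E) (hidem : E * E = E) {ζ : H}
    (hker : ∀ w, E w = 0 → ⟪w, ζ⟫ = 0) : E ζ = ζ := by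
  have hEd : E (ζ - E ζ) = 0 := by
    have h := congrFun (congrArg DFunLike.coe hidem) ζ
    simp only [ContinuousLinearMap.mul_apply] at h
    rw [map_sub, h, sub_self]
  have h1 : ⟪ζ - E ζ, ζ⟫ = 0 := hker _ hEd
  have h2 : ⟪ζ - E ζ, E ζ⟫ = 0 := by
    have h3 : ⟪(ContinuousLinearMap.adjoint E) (ζ - E ζ), ζ⟫ = ⟪ζ - E ζ, E ζ⟫ :=
      ContinuousLinearMap.adjoint_inner_left E ζ (ζ - E ζ)
    rw [← h3, ← ContinuousLinearMap.star_eq_adjoint, hsa, hEd, inner_zero_left]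
  have h4 : ⟪ζ - E ζ, ζ - E ζ⟫ = 0 := by
    rw [inner_sub_right, h1, h2, sub_zero]
  rw [inner_self_eq_zero, sub_eq_zero] at h4
  exact h4.symm

lemma proj_uniq {E F : B} (hEsa : star E = E) (hEidem : E * E = E)
    (hFsa : star F = F) (hFidem : F * F = F)
    (hker : ∀ ζ, E ζ = 0 ↔ F ζ = 0) : E = F := by
  ext ζ
  have hEd : E (ζ - E ζ) = 0 := by
    have h := congrFun (congrArg DFunLike.coe hEidem) ζ
    simp only [ContinuousLinearMap.mul_apply] at h
    rw [map_sub, h, sub_self]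
  have hFd : F (ζ - E ζ) = 0 := (hker _).mp hEd
  have hFE : F (E ζ) = E ζ := by
    apply proj_fix hFsa hFidem
    intro w hw
    exact proj_ker_inner hEsa ζ ((hker w).mpr hw)
  have : F ζ = F (E ζ) + F (ζ - E ζ) := by rw [← map_add]; congr 1; abel
  rw [this, hFd, hFE, add_zero]


/-! ### The M-level layer -/

section Mlevel

variable (M : VonNeumannAlgebra H) (τ : M →ₗ[ℂ] ℂ)

lemma coe_star_M (x : M) : ((star x : M) : B) = star (x : B) := rfl
lemma coe_mul_M (x y : M) : ((x * y : M) : B) = (x : B) * (y : B) := rfl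
lemma coe_sub_M (x y : M) : ((x - y : M) : B) = (x : B) - (y : B) := rfl
lemma coe_add_M (x y : M) : ((x + y : M) : B) = (x : B) + (y : B) := rfl
lemma coe_one_M : ((1 : M) : B) = 1 := rfl
lemma coe_zero_M : ((0 : M) : B) = 0 := rfl

variable {M}

lemma isProj_coe_star {p : M} (hp : IsProj M p) : star (p : B) = (p : B) := by
  rw [← coe_star_M]; exact congrArg Subtype.val hp.1

lemma isProj_coe_mul {p : M} (hp : IsProj M p) : (p : B) * (p : B) = (p : B) := by
  rw [← coe_mul_M]; exact congrArg Subtype.val hp.2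

lemma isProj_coe_apply {p : M} (hp : IsProj M p) (ζ : H) :
    (p : B) ((p : B) ζ) = (p : B) ζ := by
  have := congrFun (congrArg DFunLike.coe (isProj_coe_mul hp)) ζ
  simpa [ContinuousLinearMap.mul_apply] using this

variable (M)

/-- left support projection of `x` in `M`. -/
def lpM (x : M) : M :=
  ⟨vA (x : B) * star (vA (x : B)),
    mul_mem (vA_mem M _ x.2) (star_mem (vA_mem M _ x.2))⟩

/-- right support projection of `x` in `M`. -/
def rpM (x : M) : M :=
  ⟨star (vA (x : B)) * vA (x : B),
    mul_mem (star_mem (vA_mem M _ x.2)) (vA_mem M _ x.2)⟩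

lemma lpM_isProj (x : M) : IsProj M (lpM M x) :=
  ⟨Subtype.ext (lA_sa (x : B)), Subtype.ext (lA_idem (x : B))⟩

lemma rpM_isProj (x : M) : IsProj M (rpM M x) := by
  constructor
  · exact Subtype.ext (by
      show star (star (vA (x : B)) * vA (x : B)) = star (vA (x : B)) * vA (x : B)
      rw [star_mul, star_star])
  · exact Subtype.ext (by
      show (star (vA (x : B)) * vA (x : B)) * (star (vA (x : B)) * vA (x : B))
        = star (vA (x : B)) * vA (x : B)
      rw [star_vA_mul_vA]; exact Pc_idem _)

lemma trace_lpM_eq_rpM (hτ : IsFiniteTrace M τ) (x : M) :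
    τ (lpM M x) = τ (rpM M x) := by
  have hV : vA (x : B) ∈ M := vA_mem M _ x.2
  have h1 : lpM M x = (⟨vA (x : B), hV⟩ : M) * star (⟨vA (x : B), hV⟩ : M) :=
    Subtype.ext rfl
  have h2 : rpM M x = star (⟨vA (x : B), hV⟩ : M) * (⟨vA (x : B), hV⟩ : M) :=
    Subtype.ext rfl
  rw [h1, h2]
  exact hτ.tracial _ _

lemma ker_lpM (x : M) (ζ : H) :
    ((lpM M x : M) : B) ζ = 0 ↔ ((star x : M) : B) ζ = 0 := by
  rw [coe_star_M]
  exact ker_lA_iff (x : B) ζ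

lemma ker_rpM (x : M) (ζ : H) :
    ((rpM M x : M) : B) ζ = 0 ↔ (x : B) ζ = 0 := by
  have hco : ((rpM M x : M) : B) = star (vA (x : B)) * vA (x : B) := rfl
  rw [hco, star_vA_mul_vA, ker_Pc_iff]
  constructor
  · intro h
    have hn := norm_sqh_apply (x : B) ζ
    rw [h, norm_zero] at hn
    exact norm_eq_zero.mp hn.symm
  · intro h
    have hn := norm_sqh_apply (x : B) ζ
    rw [h, norm_zero] at hn
    exact norm_eq_zero.mp hn

variable {M}

lemma proj_mul_eq_of_ker {E x : M} (hE : IsProj M E)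
    (hker : ∀ ζ : H, (E : B) ζ = 0 → ((star x : M) : B) ζ = 0) : E * x = x := by
  apply Subtype.ext
  rw [coe_mul_M]
  ext ζ
  show (E : B) ((x : B) ζ) = (x : B) ζ
  apply proj_fix (isProj_coe_star hE) (isProj_coe_mul hE)
  intro w hw
  have h0 : ((star x : M) : B) w = 0 := hker w hw
  rw [coe_star_M] at h0
  have h1 : ⟪(ContinuousLinearMap.adjoint (x : B)) w, ζ⟫ = ⟪w, (x : B) ζ⟫ :=
    ContinuousLinearMap.adjoint_inner_left (x : B) ζ w
  rw [← h1, ← ContinuousLinearMap.star_eq_adjoint, h0, inner_zero_left]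

lemma trace_proj_nonneg (hτ : IsFiniteTrace M τ) {p : M} (hp : IsProj M p) :
    0 ≤ (τ p).re := by
  have h0 : star p * p = p := by rw [hp.1, hp.2]
  have h := hτ.pos_re p
  rwa [h0] at h

lemma trace_mono (hτ : IsFiniteTrace M τ) {p r : M} (hp : IsProj M p) (hr : IsProj M r)
    (hker : ∀ ζ : H, (p : B) ζ = 0 → (r : B) ζ = 0) : (τ r).re ≤ (τ p).re := by
  have hrp : r * p = r := by
    have h0 : r * (1 - p) = 0 := by
      apply Subtype.ext
      rw [coe_mul_M, coe_zero_M]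
      ext ζ
      show (r : B) (((1 - p : M) : B) ζ) = 0
      apply hker
      rw [coe_sub_M, coe_one_M]
      show (p : B) (ζ - (p : B) ζ) = 0
      rw [map_sub, isProj_coe_apply hp, sub_self]
    have h1 : r * p = r - r * (1 - p) := by noncomm_ring
    rw [h1, h0, sub_zero]
  have hpr : p * r = r := by
    have h2 := congrArg star hrp
    rwa [star_mul, hp.1, hr.1] at h2
  have hq : (p - r) * (p - r) = p - r := by
    have h3 : (p - r) * (p - r) = p * p - p * r - (r * p - r * r) := by noncomm_ring
    rw [h3, hp.2, hr.2, hpr, hrp]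
    abel
  have hqsa : star (p - r) = p - r := by rw [star_sub, hp.1, hr.1]
  have hpos : 0 ≤ (τ (p - r)).re := by
    have h4 := hτ.pos_re (p - r)
    rwa [hqsa, hq] at h4
  have h5 : τ (p - r) = τ p - τ r := map_sub τ p r
  rw [h5] at hpos
  simp only [Complex.sub_re] at hpos
  linarith

lemma proj_eq_of_ker {E F : M} (hE : IsProj M E) (hF : IsProj M F)
    (h : ∀ ζ : H, (E : B) ζ = 0 ↔ (F : B) ζ = 0) : E = F :=
  Subtype.ext (proj_uniq (isProj_coe_star hE) (isProj_coe_mul hE)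
    (isProj_coe_star hF) (isProj_coe_mul hF) h)

lemma exists_left_support (hτ : IsFiniteTrace M τ) {x p : M} (hp : IsProj M p)
    (hxp : x * p = x) :
    ∃ e : M, IsProj M e ∧ e * x = x ∧ (τ e).re ≤ (τ p).re := by
  refine ⟨lpM M x, lpM_isProj M x, ?_, ?_⟩
  · exact proj_mul_eq_of_ker (lpM_isProj M x) (fun ζ hζ => (ker_lpM M x ζ).mp hζ)
  · rw [trace_lpM_eq_rpM M τ hτ x]
    apply trace_mono τ hτ hp (rpM_isProj M x)
    intro ζ hζ
    rw [ker_rpM]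
    have hxp' : (x : B) = (x : B) * (p : B) := by
      rw [← coe_mul_M, hxp]
    rw [hxp']
    show (x : B) ((p : B) ζ) = 0
    rw [hζ, map_zero]

lemma ker_sum_proj {e f : M} (he : IsProj M e) (hf : IsProj M f) (ζ : H) :
    ((e : B) + (f : B)) ζ = 0 ↔ ((e : B) ζ = 0 ∧ (f : B) ζ = 0) := by
  constructor
  · intro h
    have hsum : ⟪((e : B) + (f : B)) ζ, ζ⟫ = 0 := by rw [h, inner_zero_left]
    have hee : ⟪(e : B) ζ, ζ⟫ = ⟪(e : B) ζ, (e : B) ζ⟫ := by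
      have h1 : ⟪(ContinuousLinearMap.adjoint (e : B)) ((e : B) ζ), ζ⟫
          = ⟪(e : B) ζ, (e : B) ζ⟫ :=
        ContinuousLinearMap.adjoint_inner_left (e : B) ζ ((e : B) ζ)
      rw [← ContinuousLinearMap.star_eq_adjoint, isProj_coe_star he] at h1
      rw [← h1, isProj_coe_apply he]
    have hff : ⟪(f : B) ζ, ζ⟫ = ⟪(f : B) ζ, (f : B) ζ⟫ := by
      have h1 : ⟪(ContinuousLinearMap.adjoint (f : B)) ((f : B) ζ), ζ⟫
          = ⟪(f : B) ζ, (f : B) ζ⟫ :=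
        ContinuousLinearMap.adjoint_inner_left (f : B) ζ ((f : B) ζ)
      rw [← ContinuousLinearMap.star_eq_adjoint, isProj_coe_star hf] at h1
      rw [← h1, isProj_coe_apply hf]
    have hre : ‖(e : B) ζ‖ ^ 2 + ‖(f : B) ζ‖ ^ 2 = 0 := by
      have h2 : ⟪(e : B) ζ, (e : B) ζ⟫ + ⟪(f : B) ζ, (f : B) ζ⟫ = 0 := by
        rw [← hee, ← hff, ← inner_add_left]
        exact hsum
      have h3 := congrArg Complex.re h2
      rw [← @inner_self_eq_norm_sq ℂ, ← @inner_self_eq_norm_sq ℂ]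
      simpa using h3
    constructor
    · have h6 : ‖(e : B) ζ‖ ^ 2 = 0 := by
        nlinarith [sq_nonneg ‖(e : B) ζ‖, sq_nonneg ‖(f : B) ζ‖]
      rw [pow_eq_zero_iff (by norm_num : (2:ℕ) ≠ 0), norm_eq_zero] at h6
      exact h6
    · have h6 : ‖(f : B) ζ‖ ^ 2 = 0 := by
        nlinarith [sq_nonneg ‖(e : B) ζ‖, sq_nonneg ‖(f : B) ζ‖]
      rw [pow_eq_zero_iff (by norm_num : (2:ℕ) ≠ 0), norm_eq_zero] at h6
      exact h6
  · rintro ⟨h1, h2⟩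
    simp [ContinuousLinearMap.add_apply, h1, h2]

lemma proj_join (hτ : IsFiniteTrace M τ) {e f : M} (he : IsProj M e) (hf : IsProj M f) :
    ∃ E : M, IsProj M E ∧ E * e = e ∧ E * f = f ∧
      (τ E).re ≤ (τ e).re + (τ f).re := by
  set E := lpM M (e + f) with hE
  have hEproj : IsProj M E := lpM_isProj M (e + f)
  have hsa_sum : ((star (e + f) : M) : B) = (e : B) + (f : B) := by
    rw [coe_star_M, coe_add_M, star_add, isProj_coe_star he, isProj_coe_star hf]
  have hkerE : ∀ ζ : H, (E : B) ζ = 0 ↔ ((e : B) ζ = 0 ∧ (f : B) ζ = 0) := by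
    intro ζ
    rw [hE]
    rw [ker_lpM M (e + f) ζ, hsa_sum]
    exact ker_sum_proj he hf ζ
  have hEe : E * e = e := by
    apply proj_mul_eq_of_ker hEproj
    intro ζ hζ
    rw [coe_star_M, isProj_coe_star he]
    exact ((hkerE ζ).mp hζ).1
  have hEf : E * f = f := by
    apply proj_mul_eq_of_ker hEproj
    intro ζ hζ
    rw [coe_star_M, isProj_coe_star hf]
    exact ((hkerE ζ).mp hζ).2
  refine ⟨E, hEproj, hEe, hEf, ?_⟩
  -- the difference E - e is the left support of y := (1-e)*f
  set y : M := (1 - e) * f with hy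
  have hstary : ((star y : M) : B) = (f : B) * (1 - (e : B)) := by
    rw [coe_star_M, hy, coe_mul_M, star_mul, isProj_coe_star hf,
      coe_sub_M, coe_one_M, star_sub, star_one, isProj_coe_star he]
  have heE : e * E = e := by
    have h2 := congrArg star hEe
    rwa [star_mul, hEproj.1, he.1] at h2
  have hdiff_proj : IsProj M (E - e) := by
    constructor
    · rw [star_sub, hEproj.1, he.1]
    · have h3 : (E - e) * (E - e) = E * E - E * e - (e * E - e * e) := by noncomm_ring
      rw [h3, hEproj.2, he.2, hEe, heE]
      abel
  have hEcoe_e : (E : B) * (e : B) = (e : B) := by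
    rw [← coe_mul_M, hEe]
  have hEcoe_e_apply : ∀ ζ : H, (E : B) ((e : B) ζ) = (e : B) ζ := by
    intro ζ
    have h4 := congrFun (congrArg DFunLike.coe hEcoe_e) ζ
    simpa [ContinuousLinearMap.mul_apply] using h4
  have hkerdiff : ∀ ζ : H, ((E - e : M) : B) ζ = 0 ↔ ((star y : M) : B) ζ = 0 := by
    intro ζ
    rw [hstary, coe_sub_M]
    constructor
    · intro h
      have hEζ : (E : B) ζ = (e : B) ζ := by
        have h5 : ((E : B) - (e : B)) ζ = (E : B) ζ - (e : B) ζ := rfl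
        rw [h5] at h
        exact sub_eq_zero.mp h
      have hEd : (E : B) (ζ - (e : B) ζ) = 0 := by
        rw [map_sub, hEζ, hEcoe_e_apply, ← hEζ, sub_self]
      have h7 := (hkerE _).mp hEd
      show (f : B) ((1 - (e : B)) ζ) = 0
      have h8 : (1 - (e : B)) ζ = ζ - (e : B) ζ := rfl
      rw [h8]
      exact h7.2
    · intro h
      have h1 : (f : B) (ζ - (e : B) ζ) = 0 := by
        have h2' : (1 - (e : B)) ζ = ζ - (e : B) ζ := rfl
        rw [← h2']
        exact h
      have h2 : (e : B) (ζ - (e : B) ζ) = 0 := by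
        rw [map_sub, isProj_coe_apply he, sub_self]
      have hEd : (E : B) (ζ - (e : B) ζ) = 0 := (hkerE _).mpr ⟨h2, h1⟩
      have h9 : (E : B) ζ = (e : B) ζ := by
        have hsplit : (E : B) ζ = (E : B) ((e : B) ζ) + (E : B) (ζ - (e : B) ζ) := by
          rw [← map_add]
          congr 1
          abel
        rw [hsplit, hEd, hEcoe_e_apply, add_zero]
      show ((E : B) - (e : B)) ζ = 0
      have hsub : ((E : B) - (e : B)) ζ = (E : B) ζ - (e : B) ζ := rfl
      rw [hsub, h9, sub_self]
  have hdiff_eq : E - e = lpM M y := by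
    apply proj_eq_of_ker hdiff_proj (lpM_isProj M y)
    intro ζ
    have h10 := hkerdiff ζ
    rw [h10]
    exact (ker_lpM M y ζ).symm
  have htr : (τ (E - e)).re ≤ (τ f).re := by
    rw [hdiff_eq, trace_lpM_eq_rpM M τ hτ y]
    apply trace_mono τ hτ hf (rpM_isProj M y)
    intro ζ hζ
    rw [ker_rpM]
    rw [hy, coe_mul_M]
    show ((1 - e : M) : B) ((f : B) ζ) = 0
    rw [hζ, map_zero]
  have h11 : τ (E - e) = τ E - τ e := map_sub τ E e
  rw [h11] at htr
  simp only [Complex.sub_re] at htr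
  linarith

lemma proj_join_fin (hτ : IsFiniteTrace M τ) :
    ∀ (n : ℕ) (e : Fin n → M), (∀ i, IsProj M (e i)) →
    ∃ E : M, IsProj M E ∧ (∀ i, E * e i = e i) ∧
      (τ E).re ≤ ∑ i, (τ (e i)).re := by
  intro n
  induction n with
  | zero =>
    intro e _
    refine ⟨0, ⟨by simp, by simp⟩, fun i => i.elim0, ?_⟩
    simp
  | succ m ih =>
    intro e he
    obtain ⟨E', hE'proj, hE'mul, hE'tr⟩ := ih (fun i => e i.castSucc) (fun i => he i.castSucc)
    obtain ⟨E, hEproj, hEE', hElast, hEtr⟩ := proj_join τ hτ hE'proj (he (Fin.last m))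
    refine ⟨E, hEproj, ?_, ?_⟩
    · intro i
      induction i using Fin.lastCases with
      | last => exact hElast
      | cast j =>
        have h1 : E * e j.castSucc = E * (E' * e j.castSucc) := by rw [hE'mul j]
        rw [h1, ← mul_assoc, hEE', hE'mul j]
    · rw [Fin.sum_univ_castSucc]
      calc (τ E).re ≤ (τ E').re + (τ (e (Fin.last m))).re := hEtr
        _ ≤ (∑ i : Fin m, (τ (e i.castSucc)).re) + (τ (e (Fin.last m))).re := by linarith

end Mlevel

/-- Left multiplication by a sum of `n` elementary tensors is `n`-Lipschitz in the
rank metric: `[ξ • η] ≤ n·[η]`. -/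
theorem rank_smul_le_card_mul (M : VonNeumannAlgebra H) (τ : M →ₗ[ℂ] ℂ)
    (hτ : IsFiniteTrace M τ)
    {L : Type*} [AddCommGroup L] [Module (BimodRing M) L]
    (n : ℕ) (a b : Fin n → M) (ξ : BimodRing M)
    (hξ : ξ = ∑ i, a i ⊗ₜ[ℂ] MulOpposite.op (b i)) (η : L) :
    rank M τ (ξ • η) ≤ (n : ℝ) * rank M τ η := by
  classical
  set S : Set ℝ := { r : ℝ | ∃ p q : M, IsProj M p ∧ IsProj M q ∧
    (((1 - p) ⊗ₜ[ℂ] (MulOpposite.op (1 - q)) : BimodRing M)) • η = 0 ∧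
    r = (τ p).re + (τ q).re } with hSdef
  have hSne : S.Nonempty := by
    refine ⟨(τ 1).re + (τ 1).re, 1, 1, ⟨star_one _, one_mul 1⟩, ⟨star_one _, one_mul 1⟩, ?_, rfl⟩
    rw [sub_self]
    rw [TensorProduct.zero_tmul]
    exact Module.zero_smul η
  have hbdd : BddBelow { r : ℝ | ∃ p q : M, IsProj M p ∧ IsProj M q ∧
      (((1 - p) ⊗ₜ[ℂ] (MulOpposite.op (1 - q)) : BimodRing M)) • (ξ • η) = 0 ∧
      r = (τ p).re + (τ q).re } := by
    refine ⟨0, ?_⟩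
    rintro r ⟨p', q', hp', hq', -, rfl⟩
    exact add_nonneg (trace_proj_nonneg τ hτ hp') (trace_proj_nonneg τ hτ hq')
  have key : ∀ r ∈ S, rank M τ (ξ • η) ≤ (n : ℝ) * r := by
    rintro r ⟨p, q, hp, hq, hann, rfl⟩
    -- left projections
    have hex : ∀ i : Fin n, ∃ e : M, IsProj M e ∧ e * (a i * p) = a i * p ∧
        (τ e).re ≤ (τ p).re :=
      fun i => exists_left_support τ hτ hp (by rw [mul_assoc, hp.2])
    choose eL' hLproj hLmul hLtr using hex
    obtain ⟨P, hPproj, hPmul, hPtr⟩ := proj_join_fin τ hτ n eL' hLproj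
    have hPto : (τ P).re ≤ (n : ℝ) * (τ p).re := by
      refine hPtr.trans ?_
      calc ∑ i, (τ (eL' i)).re ≤ ∑ _i : Fin n, (τ p).re :=
            Finset.sum_le_sum fun i _ => hLtr i
        _ = (n : ℝ) * (τ p).re := by
            rw [Finset.sum_const, Finset.card_univ, Fintype.card_fin, nsmul_eq_mul]
    have hPa : ∀ i, P * (a i * p) = a i * p := by
      intro i
      rw [← hLmul i, ← mul_assoc, hPmul i, hLmul i]
    -- right projections
    have hex2 : ∀ i : Fin n, ∃ f : M, IsProj M f ∧ f * (star (b i) * q) = star (b i) * q ∧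
        (τ f).re ≤ (τ q).re :=
      fun i => exists_left_support τ hτ hq (by rw [mul_assoc, hq.2])
    choose fR hRproj hRmul hRtr using hex2
    obtain ⟨Q, hQproj, hQmul, hQtr⟩ := proj_join_fin τ hτ n fR hRproj
    have hQto : (τ Q).re ≤ (n : ℝ) * (τ q).re := by
      refine hQtr.trans ?_
      calc ∑ i, (τ (fR i)).re ≤ ∑ _i : Fin n, (τ q).re :=
            Finset.sum_le_sum fun i _ => hRtr i
        _ = (n : ℝ) * (τ q).re := by
            rw [Finset.sum_const, Finset.card_univ, Fintype.card_fin, nsmul_eq_mul]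
    have hQb : ∀ i, Q * (star (b i) * q) = star (b i) * q := by
      intro i
      rw [← hRmul i, ← mul_assoc, hQmul i, hRmul i]
    -- algebraic identities
    have h1 : ∀ i, ((1 - P) * a i) * (1 - p) = (1 - P) * a i := by
      intro i
      have z : (1 - P) * (a i * p) = 0 := by
        rw [sub_mul, one_mul, hPa i, sub_self]
      have hexp : ((1 - P) * a i) * (1 - p) = (1 - P) * a i - (1 - P) * (a i * p) := by
        noncomm_ring
      rw [hexp, z, sub_zero]
    have h2 : ∀ i, (1 - q) * (b i * (1 - Q)) = b i * (1 - Q) := by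
      intro i
      have z1 : (1 - Q) * (star (b i) * q) = 0 := by
        rw [sub_mul, one_mul, hQb i, sub_self]
      have z2 : (q * b i) * (1 - Q) = 0 := by
        have h := congrArg star z1
        rw [star_mul, star_mul, star_star, hq.1, star_sub, star_one, hQproj.1,
          star_zero] at h
        exact h
      have hexp : (1 - q) * (b i * (1 - Q)) = b i * (1 - Q) - (q * b i) * (1 - Q) := by
        noncomm_ring
      rw [hexp, z2, sub_zero]
    -- the tensor annihilates ξ • η
    have hmulξ : (((1 - P) ⊗ₜ[ℂ] (MulOpposite.op (1 - Q)) : BimodRing M)) * ξ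
        = ∑ i, ((1 - P) * a i) ⊗ₜ[ℂ] (MulOpposite.op (b i * (1 - Q))) := by
      rw [hξ, Finset.mul_sum]
      refine Finset.sum_congr rfl fun i _ => ?_
      rw [Algebra.TensorProduct.tmul_mul_tmul, ← MulOpposite.op_mul]
    have hterm : ∀ i,
        ((((1 - P) * a i) ⊗ₜ[ℂ] (MulOpposite.op (b i * (1 - Q)))) : BimodRing M) • η = 0 := by
      intro i
      have hfac : ((((1 - P) * a i) ⊗ₜ[ℂ] (MulOpposite.op (b i * (1 - Q)))) : BimodRing M)
          = ((((1 - P) * a i) ⊗ₜ[ℂ] (MulOpposite.op (b i * (1 - Q)))) : BimodRing M) *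
            ((1 - p) ⊗ₜ[ℂ] (MulOpposite.op (1 - q))) := by
        rw [Algebra.TensorProduct.tmul_mul_tmul, h1 i, ← MulOpposite.op_mul, h2 i]
      rw [hfac]
      erw [← smul_smul, hann, smul_zero]
    have hann2 : (((1 - P) ⊗ₜ[ℂ] (MulOpposite.op (1 - Q)) : BimodRing M)) • (ξ • η) = 0 := by
      rw [smul_smul, hmulξ]
      erw [Finset.sum_smul]
      exact Finset.sum_eq_zero fun i _ => hterm i
    have hle : rank M τ (ξ • η) ≤ (τ P).re + (τ Q).re :=
      csInf_le hbdd ⟨P, Q, hPproj, hQproj, hann2, rfl⟩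
    calc rank M τ (ξ • η) ≤ (τ P).re + (τ Q).re := hle
      _ ≤ (n : ℝ) * ((τ p).re + (τ q).re) := by rw [mul_add]; exact add_le_add hPto hQto
  have hsmul : (n : ℝ) * rank M τ η = sInf ((n : ℝ) • S) := by
    rw [Real.sInf_smul_of_nonneg (by positivity : (0:ℝ) ≤ (n : ℝ)) S]
    rw [smul_eq_mul]
    rfl
  rw [hsmul]
  apply le_csInf (hSne.smul_set)
  rintro b' ⟨r, hr, rfl⟩
  simpa using key r hr

end RankCompletion
end
end
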